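/- Let Cl(p,q,r) be a Clifford algebra with n = p+q+r, and let M ∈ Cl^m(p,q,r), K ∈ Cl^k(p,q,r), and L ∈ Λ^{n−m}_r (an element of exterior degree n−m in the subalgebra generated by the null generators). If m and k are both even, or m, k, and n are all odd, then (KL)M = M(KL). -/

import Mathlib

open CliffordAlgebra

noncomputable section

/-- Diagonal weights: `p` entries `+1`, `q` entries `-1`, `r` entries `0`. -/
def cliffSig (p q : ℕ) (i : ℕ) : ℝ := if i < p then 1 else if i < p + q then -1 else 0

/-- The quadratic form of signature `(p, q, r)` on `ℝ^(p+q+r)`. -/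
def Qf (p q r : ℕ) : QuadraticForm ℝ (Fin (p + q + r) → ℝ) :=
  QuadraticMap.weightedSumSquares ℝ (fun i : Fin (p + q + r) => cliffSig p q (i : ℕ))

/-- The `i`-th generator `e_i` of `Cl(p,q,r)`. -/
def gen (p q r : ℕ) (i : Fin (p + q + r)) : CliffordAlgebra (Qf p q r) :=
  ι (Qf p q r) (Pi.single i 1)

/-- The grade-`m` subspace `Cl^m(p,q,r)`: span of products of `m` distinct generators
with increasing indices. -/
def gradeSubspace (p q r m : ℕ) : Submodule ℝ (CliffordAlgebra (Qf p q r)) :=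
  Submodule.span ℝ {x | ∃ l : List (Fin (p + q + r)),
    l.Chain' (· < ·) ∧ l.length = m ∧ x = (l.map (gen p q r)).prod}

/-- `Λ_r`: the subalgebra generated by the `r` null generators. -/
def LambdaR (p q r : ℕ) : Subalgebra ℝ (CliffordAlgebra (Qf p q r)) :=
  Algebra.adjoin ℝ {x | ∃ i : Fin (p + q + r), p + q ≤ (i : ℕ) ∧ x = gen p q r i}

/-- `Λ^d_r`: the degree-`d` component of `Λ_r`. -/
def LambdaDeg (p q r d : ℕ) : Submodule ℝ (CliffordAlgebra (Qf p q r)) :=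
  Submodule.span ℝ {x | ∃ l : List (Fin (p + q + r)),
    l.Chain' (· < ·) ∧ l.length = d ∧ (∀ i ∈ l, p + q ≤ (i : ℕ)) ∧
    x = (l.map (gen p q r)).prod}

/-- The pseudoscalar `e_1 ⋯ e_n`. -/
def pseudoscalar (p q r : ℕ) : CliffordAlgebra (Qf p q r) :=
  ((List.finRange (p + q + r)).map (gen p q r)).prod

lemma Qf_single (p q r : ℕ) (i : Fin (p+q+r)) : Qf p q r (Pi.single i 1) = cliffSig p q i := by
  simp [Qf, Pi.single_apply]

lemma gen_sq (p q r : ℕ) (i : Fin (p+q+r)) :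
    gen p q r i * gen p q r i = algebraMap ℝ _ (cliffSig p q i) := by
  rw [gen, ι_sq_scalar, Qf_single]

lemma gen_anticomm (p q r : ℕ) {i j : Fin (p+q+r)} (h : i ≠ j) :
    gen p q r i * gen p q r j = -(gen p q r j * gen p q r i) := by
  apply ι_mul_ι_comm_of_isOrtho
  rw [QuadraticMap.isOrtho_def]
  simp only [Qf, QuadraticMap.weightedSumSquares_apply, Pi.add_apply, Pi.single_apply]
  rw [← Finset.sum_add_distrib]
  apply Finset.sum_congr rfl
  intro l _
  rcases eq_or_ne l i with rfl | hi <;> rcases eq_or_ne l j with rfl | hj <;>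
    simp_all

def Pg (p q r : ℕ) (l : List (Fin (p+q+r))) : CliffordAlgebra (Qf p q r) :=
  (l.map (gen p q r)).prod

@[simp] lemma Pg_nil (p q r : ℕ) : Pg p q r [] = 1 := rfl

@[simp] lemma Pg_cons (p q r : ℕ) (x : Fin (p+q+r)) (l : List (Fin (p+q+r))) :
    Pg p q r (x :: l) = gen p q r x * Pg p q r l := by
  simp [Pg]

lemma Pg_append (p q r : ℕ) (a b : List (Fin (p+q+r))) :
    Pg p q r (a ++ b) = Pg p q r a * Pg p q r b := by
  simp [Pg]

lemma lemD0 (p q r : ℕ) (x : Fin (p+q+r)) :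
    ∀ (b : List (Fin (p+q+r))), x ∉ b →
      gen p q r x * Pg p q r b = ((-1:ℝ)^b.length) • (Pg p q r b * gen p q r x) := by
  intro b
  induction b with
  | nil => simp
  | cons y b' ih =>
    intro hx
    have hxy : x ≠ y := fun h => hx (h ▸ List.mem_cons_self)
    have hxb' : x ∉ b' := fun h => hx (List.mem_cons_of_mem _ h)
    rw [Pg_cons, ← mul_assoc, gen_anticomm p q r hxy, neg_mul, mul_assoc,
      ih hxb', mul_smul_comm, ← mul_assoc, List.length_cons, pow_succ, ← neg_smul]
    rw [mul_neg_one, neg_smul]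

lemma lemZ (p q r : ℕ) (x : Fin (p+q+r)) (hnull : p + q ≤ (x:ℕ)) :
    ∀ (b : List (Fin (p+q+r))), x ∈ b → gen p q r x * Pg p q r b = 0 := by
  intro b
  have hsq : gen p q r x * gen p q r x = 0 := by
    rw [gen_sq]
    have : cliffSig p q x = 0 := by
      unfold cliffSig
      rw [if_neg (by omega), if_neg (by omega)]
    simp [this]
  induction b with
  | nil => simp
  | cons y b' ih =>
    intro hx
    rcases eq_or_ne x y with rfl | hxy
    · rw [Pg_cons, ← mul_assoc, hsq, zero_mul]
    · have hxb' : x ∈ b' := by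
        rcases List.mem_cons.mp hx with h | h
        · exact absurd h hxy
        · exact h
      rw [Pg_cons, ← mul_assoc, gen_anticomm p q r hxy, neg_mul, mul_assoc, ih hxb']
      simp

lemma lemE (p q r : ℕ) (x : Fin (p+q+r)) (hnull : p + q ≤ (x:ℕ))
    (a b : List (Fin (p+q+r))) (ha : x ∈ a) (hb : x ∈ b) :
    Pg p q r a * Pg p q r b = 0 := by
  obtain ⟨a1, a2, rfl⟩ := List.append_of_mem ha
  have hx2 : x ∈ a2 ++ b := List.mem_append.mpr (Or.inr hb)
  rw [Pg_append, Pg_cons, mul_assoc, mul_assoc, ← Pg_append,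
    lemZ p q r x hnull _ hx2, mul_zero]

lemma sign_sq (e : ℕ) (A : CliffordAlgebra (Qf p q r)) :
    ((-1:ℝ)^e) • ((-1:ℝ)^e) • A = A := by
  rw [smul_smul, ← pow_add, Even.neg_one_pow ⟨e, rfl⟩, one_smul]

lemma lemD (p q r : ℕ) (b : List (Fin (p+q+r))) (hb : b.Nodup) (x : Fin (p+q+r)) :
    gen p q r x * Pg p q r b
      = ((-1:ℝ)^(b.length + if x ∈ b then 1 else 0)) • (Pg p q r b * gen p q r x) := by
  by_cases hx : x ∈ b
  · obtain ⟨b1, b2, rfl⟩ := List.append_of_mem hx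
    have hnd := hb
    rw [List.nodup_append] at hnd
    obtain ⟨hb1, hb2', hdisj⟩ := hnd
    have hx2 : x ∉ b2 := (List.nodup_cons.mp hb2').1
    have hx1 : x ∉ b1 := fun h => hdisj _ h _ List.mem_cons_self rfl
    have key1 : gen p q r x * Pg p q r (b1 ++ x :: b2)
        = ((-1:ℝ)^b1.length) • (Pg p q r b1 * (gen p q r x * gen p q r x) * Pg p q r b2) := by
      rw [Pg_append, Pg_cons, ← mul_assoc, lemD0 p q r x b1 hx1, smul_mul_assoc]
      congr 1
      simp only [mul_assoc]
    have key2 : Pg p q r (b1 ++ x :: b2) * gen p q r x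
        = ((-1:ℝ)^b2.length) • (Pg p q r b1 * (gen p q r x * gen p q r x) * Pg p q r b2) := by
      have h2 : Pg p q r b2 * gen p q r x = ((-1:ℝ)^b2.length) • (gen p q r x * Pg p q r b2) := by
        rw [lemD0 p q r x b2 hx2, sign_sq]
      rw [Pg_append, Pg_cons, mul_assoc, mul_assoc, h2, mul_smul_comm, mul_smul_comm]
      rw [← mul_assoc, ← mul_assoc]
      congr 1
      simp only [mul_assoc]
    have hlen : (b1 ++ x :: b2).length + 1 + b2.length = b1.length + (b2.length + 1) * 2 := by
      simp; omega
    rw [if_pos hx, key1, key2, smul_smul, ← pow_add, hlen, pow_add,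
      Even.neg_one_pow (⟨b2.length + 1, by ring⟩ : Even ((b2.length + 1) * 2)), mul_one]
  · rw [if_neg hx, add_zero, lemD0 p q r x b hx]

lemma lemC (p q r : ℕ) (b : List (Fin (p+q+r))) (hb : b.Nodup) :
    ∀ (a : List (Fin (p+q+r))),
    Pg p q r a * Pg p q r b
      = ((-1:ℝ)^(a.length * b.length + (a.filter (· ∈ b)).length)) •
          (Pg p q r b * Pg p q r a) := by
  intro a
  induction a with
  | nil => simp
  | cons x a' ih =>
    rw [Pg_cons, mul_assoc, ih, mul_smul_comm, ← mul_assoc, lemD p q r b hb x,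
      smul_mul_assoc, smul_smul, ← pow_add]
    rw [← mul_assoc]
    congr 1
    congr 1
    by_cases hx : x ∈ b
    · simp [List.filter_cons, hx]
      ring
    · simp [List.filter_cons, hx]
      ring

lemma keyLemma (p q r m k : ℕ) (lM lK lL : List (Fin (p+q+r)))
    (hMnd : lM.Nodup) (hMlen : lM.length = m)
    (hKnd : lK.Nodup) (hKlen : lK.length = k)
    (hLnd : lL.Nodup) (hLlen : lL.length = p+q+r-m)
    (hLnull : ∀ i ∈ lL, p + q ≤ (i:ℕ))
    (h : (Even m ∧ Even k) ∨ (Odd m ∧ Odd k ∧ Odd (p+q+r))) :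
    Pg p q r lK * Pg p q r lL * Pg p q r lM
      = Pg p q r lM * (Pg p q r lK * Pg p q r lL) := by
  by_cases hA : ∃ i ∈ lK, i ∈ lL
  · obtain ⟨i, hiK, hiL⟩ := hA
    rw [lemE p q r i (hLnull i hiL) lK lL hiK hiL, zero_mul, mul_zero]
  by_cases hB : ∃ i ∈ lL, i ∈ lM
  · obtain ⟨i, hiL, hiM⟩ := hB
    rw [mul_assoc, lemE p q r i (hLnull i hiL) lL lM hiL hiM, mul_zero,
      lemC p q r lL hLnd lK, mul_smul_comm, ← mul_assoc,
      lemE p q r i (hLnull i hiL) lM lL hiM hiL, zero_mul, smul_zero]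
  by_cases hC : ∃ i ∈ lK, p + q ≤ (i:ℕ) ∧ i ∈ lM
  · obtain ⟨i, hiK, hinull, hiM⟩ := hC
    rw [mul_assoc, lemC p q r lM hMnd lL, mul_smul_comm, ← mul_assoc,
      lemE p q r i hinull lK lM hiK hiM, zero_mul, smul_zero,
      ← mul_assoc, lemE p q r i hinull lM lK hiM hiK, zero_mul]
  -- main case
  push_neg at hA hB hC
  have hmn : m ≤ p + q + r := by
    have := hMnd.length_le_card
    rwa [hMlen, Fintype.card_fin] at this
  have hdisj : lM.Disjoint lL := fun {a} haM haL => hB a haL haM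
  have hndML : (lM ++ lL).Nodup := List.Nodup.append hMnd hLnd hdisj
  have hlenML : (lM ++ lL).length = p + q + r := by
    rw [List.length_append, hMlen, hLlen]; omega
  have hcover : ∀ i : Fin (p+q+r), i ∈ lM ∨ i ∈ lL := by
    intro i
    have hcard : (lM ++ lL).toFinset.card = Fintype.card (Fin (p+q+r)) := by
      rw [List.toFinset_card_of_nodup hndML, hlenML, Fintype.card_fin]
    have huniv := Finset.eq_univ_of_card _ hcard
    have : i ∈ (lM ++ lL).toFinset := by rw [huniv]; exact Finset.mem_univ i
    rw [List.mem_toFinset, List.mem_append] at this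
    exact this
  have hKsub : ∀ i ∈ lK, i ∈ lM := by
    intro i hiK
    rcases hcover i with hiM | hiL
    · exact hiM
    · exact absurd hiL (hA i hiK)
  have hfilK : (lK.filter (· ∈ lM)).length = k := by
    rw [List.filter_eq_self.mpr (fun a ha => by simpa using hKsub a ha), hKlen]
  have hfilL : (lL.filter (· ∈ lM)).length = 0 := by
    simp only [List.length_eq_zero_iff]
    rw [List.filter_eq_nil_iff]
    intro a ha
    simpa using fun haM => hdisj haM ha
  have hEeven : Even ((lK ++ lL).length * lM.length
      + ((lK ++ lL).filter (· ∈ lM)).length) := by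
    have hlen2 : (lK ++ lL).length = k + (p + q + r - m) := by
      rw [List.length_append, hKlen, hLlen]
    have hfil2 : ((lK ++ lL).filter (· ∈ lM)).length = k := by
      rw [List.filter_append, List.length_append, hfilK, hfilL]
      omega
    rw [hlen2, hfil2, hMlen]
    rcases h with ⟨hm, hk⟩ | ⟨hm, hk, hn⟩
    · exact (hm.mul_left _).add hk
    · have hnm : Even (p + q + r - m) := Nat.Odd.sub_odd hn hm
      exact (((hk.add_even hnm).mul hm)).add_odd hk
  rw [← Pg_append, lemC p q r lM hMnd (lK ++ lL), hEeven.neg_one_pow, one_smul, Pg_append]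

theorem stmt8' (p q r m k : ℕ) (M K L : CliffordAlgebra (Qf p q r))
    (hM : M ∈ Submodule.span ℝ {x | ∃ l : List (Fin (p + q + r)),
      l.Chain' (· < ·) ∧ l.length = m ∧ x = (l.map (gen p q r)).prod})
    (hK : K ∈ Submodule.span ℝ {x | ∃ l : List (Fin (p + q + r)),
      l.Chain' (· < ·) ∧ l.length = k ∧ x = (l.map (gen p q r)).prod})
    (hL : L ∈ Submodule.span ℝ {x | ∃ l : List (Fin (p + q + r)),
      l.Chain' (· < ·) ∧ l.length = p + q + r - m ∧ (∀ i ∈ l, p + q ≤ (i : ℕ)) ∧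
      x = (l.map (gen p q r)).prod})
    (h : (Even m ∧ Even k) ∨ (Odd m ∧ Odd k ∧ Odd (p + q + r))) :
    K * L * M = M * (K * L) := by
  induction hM using Submodule.span_induction with
  | zero => simp
  | add x y hx hy ihx ihy => simp [mul_add, add_mul, ihx, ihy]
  | smul a x hx ihx => simp [mul_smul_comm, smul_mul_assoc, ihx]
  | mem Mx hMx =>
    induction hK using Submodule.span_induction with
    | zero => simp
    | add x y hx hy ihx ihy => simp [mul_add, add_mul, ihx, ihy]
    | smul a x hx ihx => simp [mul_smul_comm, smul_mul_assoc, ihx]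
    | mem Kx hKx =>
      induction hL using Submodule.span_induction with
      | zero => simp
      | add x y hx hy ihx ihy => simp [mul_add, add_mul, ihx, ihy]
      | smul a x hx ihx => simp [mul_smul_comm, smul_mul_assoc, ihx]
      | mem Lx hLx =>
        obtain ⟨lM, hMc, hMlen, rfl⟩ := hMx
        obtain ⟨lK, hKc, hKlen, rfl⟩ := hKx
        obtain ⟨lL, hLc, hLlen, hLnull, rfl⟩ := hLx
        have ndM : lM.Nodup := (List.isChain_iff_pairwise.mp hMc).imp ne_of_lt
        have ndK : lK.Nodup := (List.isChain_iff_pairwise.mp hKc).imp ne_of_lt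
        have ndL : lL.Nodup := (List.isChain_iff_pairwise.mp hLc).imp ne_of_lt
        exact keyLemma p q r m k lM lK lL ndM hMlen ndK hKlen ndL hLlen hLnull h

/-- For `M ∈ Cl^m`, `K ∈ Cl^k`, `L ∈ Λ^{n-m}_r`: if `m, k` are even, or `m, k, n` are all
odd, then `(KL)M = M(KL)`. -/
theorem stmt8 (p q r m k : ℕ) (M K L : CliffordAlgebra (Qf p q r))
    (hM : M ∈ gradeSubspace p q r m) (hK : K ∈ gradeSubspace p q r k)
    (hL : L ∈ LambdaDeg p q r (p + q + r - m))
    (h : (Even m ∧ Even k) ∨ (Odd m ∧ Odd k ∧ Odd (p + q + r))) :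
    K * L * M = M * (K * L) := by
  exact stmt8' p q r m k M K L hM hK hL h
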